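/- Let σ be a ccc geodesic bicombing on a complete metric space (X,d), and let ζ,η be σ-rays. Then ζ and η are asymptotic if and only if there exists D ≥ 0 such that for every r > 0 there exists t ≥ r with inf_{s≥0} d(ζ(t),η(s)) ≤ D. -/

import Mathlib

open Metric Set

variable {X : Type*} [MetricSpace X]

/-- A geodesic bicombing on a metric space: a continuous choice of constant-speed
geodesics, parametrized on `[0,1]`. -/
def IsGeodesicBicombing (σ : X → X → ℝ → X) : Prop :=
  ContinuousOn (fun p : X × X × ℝ => σ p.1 p.2.1 p.2.2)
    {p : X × X × ℝ | p.2.2 ∈ Set.Icc (0 : ℝ) 1} ∧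
  (∀ x y : X, σ x y 0 = x) ∧
  (∀ x y : X, σ x y 1 = y) ∧
  (∀ x y : X, ∀ s ∈ Set.Icc (0 : ℝ) 1, ∀ t ∈ Set.Icc (0 : ℝ) 1,
    dist (σ x y s) (σ x y t) = |s - t| * dist x y)

/-- A bicombing is conical. -/
def IsConical (σ : X → X → ℝ → X) : Prop :=
  ∀ x y x' y' : X, ∀ t ∈ Set.Icc (0 : ℝ) 1,
    dist (σ x y t) (σ x' y' t) ≤ (1 - t) * dist x x' + t * dist y y'

/-- A bicombing is consistent. -/
def IsConsistent (σ : X → X → ℝ → X) : Prop :=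
  ∀ x y : X, ∀ s t l : ℝ, 0 ≤ s → s ≤ t → t ≤ 1 → l ∈ Set.Icc (0 : ℝ) 1 →
    σ (σ x y s) (σ x y t) l = σ x y ((1 - l) * s + l * t)

/-- A ccc bicombing: a geodesic bicombing that is consistent and conical. -/
def IsCCC (σ : X → X → ℝ → X) : Prop :=
  IsGeodesicBicombing σ ∧ IsConsistent σ ∧ IsConical σ

/-- A `σ`-ray: a unit-speed geodesic ray compatible with the bicombing `σ`
(encoded as a map on `ℝ` which is constant on `(-∞,0]`). -/
def IsRay (σ : X → X → ℝ → X) (ξ : ℝ → X) : Prop :=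
  (∀ t : ℝ, t ≤ 0 → ξ t = ξ 0) ∧
  (∀ s t : ℝ, 0 ≤ s → 0 ≤ t → dist (ξ s) (ξ t) = |s - t|) ∧
  (∀ t : ℝ, 0 ≤ t → ∀ s ∈ Set.Icc (0 : ℝ) 1, σ (ξ 0) (ξ t) s = ξ (s * t))

/-- Two rays are asymptotic: their distance at time `t` is uniformly bounded for `t ≥ 0`. -/
def Asymptotic (ξ ζ : ℝ → X) : Prop :=
  ∃ M : ℝ, ∀ t : ℝ, 0 ≤ t → dist (ξ t) (ζ t) ≤ M

/-- **Characterisation of asymptotic rays** (Proposition `asymptotic (iii)`): two σ-rays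
are asymptotic iff one of them comes back within a universally bounded distance of the
image of the other at arbitrarily large times. -/
theorem asymptotic_iff_comes_back_close [CompleteSpace X]
    (σ : X → X → ℝ → X) (hσ : IsCCC σ)
    (ζ η : ℝ → X) (hζ : IsRay σ ζ) (hη : IsRay σ η) :
    Asymptotic ζ η ↔
      ∃ D : ℝ, 0 ≤ D ∧ ∀ r : ℝ, 0 < r → ∃ t : ℝ, r ≤ t ∧
        (⨅ s : Set.Ici (0 : ℝ), dist (ζ t) (η ↑s)) ≤ D := by
  obtain ⟨hgeo, hcons, hconic⟩ := hσ
  obtain ⟨hζ0, hζd, hζσ⟩ := hζ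
  obtain ⟨hη0, hηd, hησ⟩ := hη
  constructor
  · rintro ⟨M, hM⟩
    refine ⟨max M 0, le_max_right _ _, fun r hr => ⟨r, le_refl r, ?_⟩⟩
    have hbdd : BddBelow (Set.range fun s : Set.Ici (0:ℝ) => dist (ζ r) (η ↑s)) := by
      refine ⟨0, fun x hx => ?_⟩
      obtain ⟨s, rfl⟩ := hx
      exact dist_nonneg
    calc (⨅ s : Set.Ici (0:ℝ), dist (ζ r) (η ↑s))
        ≤ dist (ζ r) (η r) := ciInf_le hbdd ⟨r, hr.le⟩
      _ ≤ M := hM r hr.le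
      _ ≤ max M 0 := le_max_left _ _
  · rintro ⟨D, hD, hcb⟩
    refine ⟨dist (ζ 0) (η 0), fun u hu => ?_⟩
    set M := dist (ζ 0) (η 0) with hMdef
    have hMnn : 0 ≤ M := dist_nonneg
    rcases eq_or_lt_of_le hu with h0 | hupos
    · rw [← h0]
    refine le_of_forall_pos_le_add (fun ε hε => ?_)
    set C := M + 2*D + 2 with hC
    have hCpos : 0 < C := by positivity
    have hrpos : 0 < max u (u * C / ε) := lt_max_of_lt_left hupos
    obtain ⟨t, ht, hinf⟩ := hcb _ hrpos
    have htu : u ≤ t := le_trans (le_max_left _ _) ht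
    have htpos : 0 < t := lt_of_lt_of_le hupos htu
    have h2 : u * C / ε ≤ t := le_trans (le_max_right _ _) ht
    obtain ⟨⟨s, hs⟩, hsd⟩ := exists_lt_of_ciInf_lt (lt_of_le_of_lt hinf (lt_add_one D))
    simp only [Set.mem_Ici] at hs
    have hsd' : dist (ζ t) (η s) ≤ D + 1 := hsd.le
    set l := u / t with hl
    have hl0 : 0 ≤ l := div_nonneg hu htpos.le
    have hl1 : l ≤ 1 := (div_le_one htpos).mpr htu
    have hlt : l * t = u := div_mul_cancel₀ u htpos.ne'
    have hζu : σ (ζ 0) (ζ t) l = ζ u := by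
      rw [hζσ t htpos.le l ⟨hl0, hl1⟩, hlt]
    have hηls : σ (η 0) (η s) l = η (l * s) := hησ s hs l ⟨hl0, hl1⟩
    have hcon := hconic (ζ 0) (ζ t) (η 0) (η s) l ⟨hl0, hl1⟩
    rw [hζu, hηls] at hcon
    have hdt : dist (ζ 0) (ζ t) = t := by
      rw [hζd 0 t le_rfl htpos.le, abs_of_nonpos (by linarith)]; ring
    have hds : dist (η 0) (η s) = s := by
      rw [hηd 0 s le_rfl hs, abs_of_nonpos (by linarith)]; ring
    have hst : |s - t| ≤ M + (D + 1) := by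
      rw [abs_sub_le_iff]
      have hsd'' : dist (η s) (ζ t) ≤ D + 1 := by rw [dist_comm]; exact hsd'
      have hM' : dist (η 0) (ζ 0) = M := dist_comm (η 0) (ζ 0)
      constructor
      · have := dist_triangle4 (η 0) (ζ 0) (ζ t) (η s)
        rw [hds, hM', hdt, dist_comm (ζ t) (η s)] at this
        linarith
      · have := dist_triangle4 (ζ 0) (η 0) (η s) (ζ t)
        rw [hdt, hds] at this
        linarith
    have hd2 : dist (η (l * s)) (η u) = l * |s - t| := by
      rw [hηd (l * s) u (mul_nonneg hl0 hs) hu, ← hlt, ← mul_sub, abs_mul,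
        abs_of_nonneg hl0]
    have hlC : l * C ≤ ε := by
      have h3 : u * C ≤ t * ε := by
        rw [div_le_iff₀ hε] at h2
        linarith
      rw [hl, div_mul_eq_mul_div, div_le_iff₀ htpos]
      linarith
    have hlM : 0 ≤ l * M := mul_nonneg hl0 hMnn
    have e1 : l * dist (ζ t) (η s) ≤ l * (D + 1) := mul_le_mul_of_nonneg_left hsd' hl0
    have e2 : l * |s - t| ≤ l * (M + (D + 1)) := mul_le_mul_of_nonneg_left hst hl0
    calc dist (ζ u) (η u) ≤ dist (ζ u) (η (l * s)) + dist (η (l * s)) (η u) :=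
          dist_triangle _ _ _
      _ ≤ ((1 - l) * M + l * dist (ζ t) (η s)) + l * |s - t| := by
          rw [hd2]; exact add_le_add_left hcon _
      _ ≤ M + ε := by nlinarith
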